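/- arXiv:1407.4692 — 2 statements merged into one kernel-verified Lean document; each statement's English description precedes it below -/
import Mathlib

section
/- Fix an integer k ≥ 1 and an ordinal α. (i) If T, T' ∈ k-Tr(α) and T' ≻₁ T, then h_k(T', α) < h_k(T, α). (ii) For every T ∈ k-Tr(α), h_k(T, α) = sup{ h_k(T', α) + 1 : T' ∈ k-Tr(α), T' ≻₁ T }; i.e. h_k(T, α) is exactly the ordinal rank of T in k-Tr(α) with respect to the one-step extension relation ≻₁. -/
/-- Natural (Hessenberg) sum of two ordinals, as defined in the older Mathlib:
`a ♯ b = max (blsub a fun a' _ => a' ♯ b) (blsub b fun b' _ => a ♯ b')`. -/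
noncomputable def Ordinal.nadd (a b : Ordinal.{u}) : Ordinal.{u} :=
  max (⨆ a' : Set.Iio a, Order.succ (Ordinal.nadd a'.1 b))
    (⨆ b' : Set.Iio b, Order.succ (Ordinal.nadd a b'.1))
termination_by (a, b)
decreasing_by
  · exact Prod.Lex.left _ _ a'.2
  · exact Prod.Lex.right _ b'.2

/-- `nmulNat γ k` is the `k`-fold natural (Hessenberg) sum `γ ⊕ ⋯ ⊕ γ`. -/
noncomputable def nmulNat (γ : Ordinal) : ℕ → Ordinal
  | 0 => 0
  | n + 1 => Ordinal.nadd (nmulNat γ n) γ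

/-- `hNil k α = sup { hNil k β * k + 1 : β < α }`, where `* k` is the `k`-fold natural sum. -/
noncomputable def hNil (k : ℕ) (α : Ordinal) : Ordinal :=
  ⨆ β : Set.Iio α, nmulNat (hNil k β.1) k + 1
termination_by α
decreasing_by exact β.2
/-- Finite `k`-branching trees with ordinal labels: every node has `k` ordered child
positions, each vacant (`nil`) or occupied by a child node. -/
inductive KTree (k : ℕ) : Type 1 where
  | nil : KTree k
  | node : Ordinal → (Fin k → KTree k) → KTree k

/-- `T.Valid α` : every label is `< α` and every child's label is strictly smaller than
its parent's label; i.e. `T ∈ k-Tr(α)`. -/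
def KTree.Valid {k : ℕ} : KTree k → Ordinal → Prop
  | .nil, _ => True
  | .node β ts, α => β < α ∧ ∀ i, (ts i).Valid β

/-- One-step extension `T' ≻₁ T`: `T'` is obtained from `T` by adding exactly one node
(at a vacant child position, or as the root when `T` is empty). -/
inductive KTree.Ext1 {k : ℕ} : KTree k → KTree k → Prop
  | root (β : Ordinal) : Ext1 (.node β fun _ => .nil) .nil
  | child {β : Ordinal} {ts' ts : Fin k → KTree k} (i : Fin k) :
      Ext1 (ts' i) (ts i) → (∀ j, j ≠ i → ts' j = ts j) → Ext1 (.node β ts') (.node β ts)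

/-- Natural (Hessenberg) sum of a finite family of ordinals. -/
noncomputable def natSumFin {k : ℕ} (f : Fin k → Ordinal) : Ordinal :=
  List.foldr Ordinal.nadd 0 (List.ofFn f)

/-- `hAux T α`: for nonempty `T` this is the natural sum, over all vacant child positions
of `T`, of `hNil k β` where `β` is the label of the node owning that vacant position;
`hAux nil α = hNil k α`.  This is the function `h_k(·, α)`. -/
noncomputable def hAux {k : ℕ} : KTree k → Ordinal → Ordinal
  | .nil, α => hNil k α
  | .node β ts, _ => natSumFin fun i => hAux (ts i) β

section Aux
open Ordinal

local infixl:65 " ♯ " => Ordinal.nadd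

lemma nadd_def' (a b : Ordinal.{u}) : a ♯ b = max (⨆ a' : Set.Iio a, Order.succ (a'.1 ♯ b))
    (⨆ b' : Set.Iio b, Order.succ (a ♯ b'.1)) := by
  rw [Ordinal.nadd]

lemma nadd_lt_nadd_right' {a' a : Ordinal.{u}} (h : a' < a) (b : Ordinal.{u}) : a' ♯ b < a ♯ b := by
  rw [nadd_def' a b]
  exact Order.succ_le_iff.1 ((Ordinal.le_iSup (fun x : Set.Iio a => Order.succ (x.1 ♯ b)) ⟨a', h⟩).trans
    (le_max_left _ _))

lemma nadd_lt_nadd_left' {b' b : Ordinal.{u}} (h : b' < b) (a : Ordinal.{u}) : a ♯ b' < a ♯ b := by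
  rw [nadd_def' a b]
  exact Order.succ_le_iff.1 ((Ordinal.le_iSup (fun x : Set.Iio b => Order.succ (a ♯ x.1)) ⟨b', h⟩).trans
    (le_max_right _ _))

lemma Ordinal.nadd_le_nadd_left {b c : Ordinal.{u}} (h : b ≤ c) (a : Ordinal.{u}) : a ♯ b ≤ a ♯ c := by
  rcases h.lt_or_eq with h | rfl
  · exact (nadd_lt_nadd_left' h a).le
  · exact le_rfl

lemma nadd_le_nadd_right' {b c : Ordinal.{u}} (h : b ≤ c) (a : Ordinal.{u}) : b ♯ a ≤ c ♯ a := by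
  rcases h.lt_or_eq with h | rfl
  · exact (nadd_lt_nadd_right' h a).le
  · exact le_rfl

lemma Ordinal.lt_nadd_iff {a b x : Ordinal.{u}} :
    x < a ♯ b ↔ (∃ a' < a, x ≤ a' ♯ b) ∨ (∃ b' < b, x ≤ a ♯ b') := by
  constructor
  · intro hx
    rw [nadd_def' a b, lt_max_iff, Ordinal.lt_iSup_iff, Ordinal.lt_iSup_iff] at hx
    rcases hx with ⟨a', ha'⟩ | ⟨b', hb'⟩
    · exact Or.inl ⟨a'.1, a'.2, Order.lt_succ_iff.1 ha'⟩
    · exact Or.inr ⟨b'.1, b'.2, Order.lt_succ_iff.1 hb'⟩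
  · rintro (⟨a', ha', hle⟩ | ⟨b', hb', hle⟩)
    · exact hle.trans_lt (nadd_lt_nadd_right' ha' b)
    · exact hle.trans_lt (nadd_lt_nadd_left' hb' a)

theorem Ordinal.nadd_comm (a b : Ordinal.{u}) : a ♯ b = b ♯ a := by
  rw [nadd_def' a b, nadd_def' b a, max_comm]
  have h1 : (fun a' : Set.Iio a => Order.succ (a'.1 ♯ b)) = fun a' => Order.succ (b ♯ a'.1) :=
    funext fun a' => by rw [Ordinal.nadd_comm a'.1 b]
  have h2 : (fun b' : Set.Iio b => Order.succ (a ♯ b'.1)) = fun b' => Order.succ (b'.1 ♯ a) :=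
    funext fun b' => by rw [Ordinal.nadd_comm a b'.1]
  rw [h1, h2]
termination_by (a, b)
decreasing_by
  · exact Prod.Lex.left _ _ a'.2
  · exact Prod.Lex.right _ b'.2

universe v

instance small_Iio_zero (α : Ordinal.{0}) : Small.{v} (Set.Iio α) :=
  small_lift.{1, v, 0} _

lemma hNil_def (k : ℕ) (α : Ordinal.{0}) :
    hNil.{0, v} k α = ⨆ β : Set.Iio α, nmulNat (hNil.{0, v} k β.1) k + 1 := by
  rw [hNil]

lemma le_hNil {k : ℕ} {β α : Ordinal.{0}} (h : β < α) :
    nmulNat (hNil.{0, v} k β) k + 1 ≤ hNil.{0, v} k α := by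
  rw [hNil_def k α]
  exact Ordinal.le_iSup (fun b : Set.Iio α => nmulNat (hNil.{0, v} k b.1) k + 1) ⟨β, h⟩

lemma lt_hNil {k : ℕ} {α : Ordinal.{0}} {x : Ordinal.{v}} (h : x < hNil.{0, v} k α) :
    ∃ β < α, x < nmulNat (hNil.{0, v} k β) k + 1 := by
  by_contra hc
  push_neg at hc
  have : hNil.{0, v} k α ≤ x := by
    rw [hNil_def k α]
    exact Ordinal.iSup_le fun β => hc β.1 β.2
  exact absurd h (not_lt.2 this)

lemma natSumFin_succ {k : ℕ} (f : Fin (k + 1) → Ordinal.{v}) :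
    natSumFin f = f 0 ♯ natSumFin (f ∘ Fin.succ) := by
  unfold natSumFin
  rw [List.ofFn_succ, List.foldr_cons]
  rfl

lemma natSumFin_zero (f : Fin 0 → Ordinal.{v}) : natSumFin f = 0 := by
  simp [natSumFin]

lemma natSumFin_le : ∀ {k : ℕ} {f g : Fin k → Ordinal.{v}} (h : ∀ i, f i ≤ g i),
    natSumFin f ≤ natSumFin g := by
  intro k
  induction k with
  | zero => intro f g _; rw [natSumFin_zero, natSumFin_zero]
  | succ k ih =>
      intro f g h
      rw [natSumFin_succ f, natSumFin_succ g]
      exact (nadd_le_nadd_right' (h 0) _).trans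
        (Ordinal.nadd_le_nadd_left (ih fun i => h i.succ) _)

lemma natSumFin_lt : ∀ {k : ℕ} {f g : Fin k → Ordinal.{v}} (i : Fin k) (hi : f i < g i)
    (h : ∀ j, j ≠ i → f j = g j), natSumFin f < natSumFin g := by
  intro k
  induction k with
  | zero => intro f g i; exact i.elim0
  | succ k ih =>
      intro f g i hi h
      rw [natSumFin_succ f, natSumFin_succ g]
      refine Fin.cases (motive := fun i => f i < g i → (∀ j, j ≠ i → f j = g j) →
        f 0 ♯ natSumFin (f ∘ Fin.succ) < g 0 ♯ natSumFin (g ∘ Fin.succ)) ?_ ?_ i hi h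
      · intro hi h
        have he : f ∘ Fin.succ = g ∘ Fin.succ :=
          funext fun j => h j.succ (Fin.succ_ne_zero j)
        rw [he]
        exact nadd_lt_nadd_right' hi _
      · intro i hi h
        rw [h 0 (Fin.succ_ne_zero i).symm]
        exact nadd_lt_nadd_left' (ih i hi fun j hj => h j.succ
          (fun e => hj (Fin.succ_injective _ e))) _

lemma natSumFin_const (c : Ordinal.{v}) :
    ∀ n : ℕ, natSumFin (fun _ : Fin n => c) = nmulNat c n := by
  intro n
  induction n with
  | zero => rw [natSumFin_zero]; rfl
  | succ n ih =>
      rw [natSumFin_succ]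
      show c ♯ natSumFin (fun _ : Fin n => c) = nmulNat c (n + 1)
      rw [ih]
      show c ♯ nmulNat c n = nmulNat c n ♯ c
      exact Ordinal.nadd_comm _ _

lemma lt_natSumFin : ∀ {k : ℕ} {f : Fin k → Ordinal.{v}} {x : Ordinal.{v}}, x < natSumFin f →
    ∃ i v, v < f i ∧ x ≤ natSumFin (Function.update f i v) := by
  intro k
  induction k with
  | zero =>
      intro f x hx
      exact absurd hx (by simp [natSumFin_zero])
  | succ k ih =>
      intro f x hx
      rw [natSumFin_succ] at hx
      rcases Ordinal.lt_nadd_iff.1 hx with ⟨w, hw, hle⟩ | ⟨y, hy, hle⟩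
      · refine ⟨0, w, hw, ?_⟩
        rw [natSumFin_succ]
        have h1 : Function.update f 0 w ∘ Fin.succ = f ∘ Fin.succ := by
          funext j
          exact Function.update_of_ne (Fin.succ_ne_zero j) _ _
        rw [h1, Function.update_self]
        exact hle
      · obtain ⟨i, w, hw, hle'⟩ := ih hy
        refine ⟨i.succ, w, hw, ?_⟩
        rw [natSumFin_succ]
        have h0 : Function.update f i.succ w 0 = f 0 :=
          Function.update_of_ne (Fin.succ_ne_zero i).symm _ _
        have h1 : Function.update f i.succ w ∘ Fin.succ = Function.update (f ∘ Fin.succ) i w := by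
          funext j
          rcases eq_or_ne j i with rfl | hj
          · simp
          · rw [Function.comp_apply, Function.update_of_ne hj,
              Function.update_of_ne (fun h => hj (Fin.succ_injective _ h)), Function.comp_apply]
        rw [h0, h1]
        exact hle.trans (Ordinal.nadd_le_nadd_left hle' _)

lemma ext1_lt {k : ℕ} : ∀ {T T' : KTree k}, T'.Ext1 T → ∀ α : Ordinal.{0},
    T.Valid α → T'.Valid α → hAux.{v} T' α < hAux.{v} T α := by
  intro T T' h
  induction h with
  | root β =>
      intro α _ hT'
      obtain ⟨hβ, _⟩ := hT'
      show natSumFin (fun _ : Fin k => hAux.{v} (KTree.nil : KTree k) β) < hNil.{0, v} k α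
      have he : natSumFin (fun _ : Fin k => hAux.{v} (KTree.nil : KTree k) β)
          = nmulNat (hNil.{0, v} k β) k := by
        show natSumFin (fun _ : Fin k => hNil.{0, v} k β) = _
        exact natSumFin_const _ k
      rw [he]
      exact lt_of_lt_of_le (lt_add_one _) (le_hNil hβ)
  | @child β ts' ts i hext heq ih =>
      intro α hT hT'
      obtain ⟨hβ, hts⟩ := hT
      obtain ⟨_, hts'⟩ := hT'
      show natSumFin (fun j => hAux.{v} (ts' j) β) < natSumFin (fun j => hAux.{v} (ts j) β)
      exact natSumFin_lt i (ih β (hts i) (hts' i)) fun j hj => by rw [heq j hj]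

lemma rank {k : ℕ} : ∀ (T : KTree k) (α : Ordinal.{0}), T.Valid α →
    hAux.{v} T α = sSup {o : Ordinal.{v} | ∃ T' : KTree k, T'.Valid α ∧ T'.Ext1 T ∧
      o = hAux.{v} T' α + 1} := by
  intro T
  induction T with
  | nil =>
      intro α _
      set S : Set Ordinal.{v} := {o : Ordinal.{v} | ∃ T' : KTree k, T'.Valid α ∧
        T'.Ext1 (KTree.nil : KTree k) ∧ o = hAux.{v} T' α + 1} with hS
      have hbdd : ∀ o ∈ S, o ≤ hAux.{v} (KTree.nil : KTree k) α := by
        rintro o ⟨T', hT', hext, rfl⟩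
        exact Order.add_one_le_of_lt (ext1_lt hext α trivial hT')
      refine le_antisymm (le_of_forall_lt fun x hx => ?_) (csSup_le' hbdd)
      have hx' : x < hNil.{0, v} k α := hx
      obtain ⟨β, hβ, hxβ⟩ := lt_hNil hx'
      have hmem : nmulNat (hNil.{0, v} k β) k + 1 ∈ S := by
        refine ⟨KTree.node β fun _ => KTree.nil, ⟨hβ, fun _ => trivial⟩, KTree.Ext1.root β, ?_⟩
        show _ = natSumFin (fun _ : Fin k => hAux.{v} (KTree.nil : KTree k) β) + 1
        rw [show (fun _ : Fin k => hAux.{v} (KTree.nil : KTree k) β)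
            = fun _ : Fin k => hNil.{0, v} k β from rfl, natSumFin_const]
      exact lt_of_lt_of_le hxβ (le_csSup ⟨hAux.{v} (KTree.nil : KTree k) α, hbdd⟩ hmem)
  | node β ts ih =>
      intro α hvalid
      obtain ⟨hβ, hts⟩ := hvalid
      set S : Set Ordinal.{v} := {o : Ordinal.{v} | ∃ T' : KTree k, T'.Valid α ∧
        T'.Ext1 (KTree.node β ts) ∧ o = hAux.{v} T' α + 1} with hS
      have hbdd : ∀ o ∈ S, o ≤ hAux.{v} (KTree.node β ts) α := by
        rintro o ⟨T', hT', hext, rfl⟩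
        exact Order.add_one_le_of_lt (ext1_lt hext α ⟨hβ, hts⟩ hT')
      refine le_antisymm (le_of_forall_lt fun x hx => ?_) (csSup_le' hbdd)
      have hx' : x < natSumFin fun i => hAux.{v} (ts i) β := hx
      obtain ⟨i, w, hw, hle⟩ := lt_natSumFin hx'
      rw [ih i β (hts i)] at hw
      have hne : {o : Ordinal.{v} | ∃ T' : KTree k, T'.Valid β ∧ T'.Ext1 (ts i) ∧
          o = hAux.{v} T' β + 1}.Nonempty := by
        by_contra hn
        rw [Set.not_nonempty_iff_eq_empty] at hn
        rw [hn, csSup_empty] at hw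
        exact absurd hw not_lt_bot
      obtain ⟨o, ⟨s', hs', hsext, rfl⟩, hwo⟩ := exists_lt_of_lt_csSup hne hw
      have hwle : w ≤ hAux.{v} s' β := Order.le_of_lt_add_one hwo
      set ts' : Fin k → KTree k := Function.update ts i s' with hts'
      have hT'valid : (KTree.node β ts').Valid α := by
        refine ⟨hβ, fun j => ?_⟩
        rcases eq_or_ne j i with rfl | hj
        · simpa [hts'] using hs'
        · simpa [hts', Function.update_of_ne hj] using hts j
      have hT'ext : (KTree.node β ts').Ext1 (KTree.node β ts) := by
        refine KTree.Ext1.child i ?_ fun j hj => ?_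
        · simpa [hts'] using hsext
        · simp [hts', Function.update_of_ne hj]
      have hmem : hAux.{v} (KTree.node β ts') α + 1 ∈ S :=
        ⟨KTree.node β ts', hT'valid, hT'ext, rfl⟩
      have hxle : x ≤ hAux.{v} (KTree.node β ts') α := by
        refine hle.trans ?_
        show natSumFin _ ≤ natSumFin fun j => hAux.{v} (ts' j) β
        refine natSumFin_le fun j => ?_
        rcases eq_or_ne j i with rfl | hj
        · simpa [hts', Function.update_self] using hwle
        · simp [hts', Function.update_of_ne hj]
      calc x ≤ hAux.{v} (KTree.node β ts') α := hxle
        _ < hAux.{v} (KTree.node β ts') α + 1 := lt_add_one _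
        _ ≤ sSup S := le_csSup ⟨hAux.{v} (KTree.node β ts) α, hbdd⟩ hmem

end Aux

/-- (i) `h_k(·, α)` is strictly decreasing along one-step extensions in
`k-Tr(α)`; (ii) for every `T ∈ k-Tr(α)`, `h_k(T, α)` is exactly the ordinal rank of `T`,
i.e. `h_k(T, α) = sup { h_k(T', α) + 1 : T' ∈ k-Tr(α), T' ≻₁ T }`. -/
theorem stmt_5 (k : ℕ) (hk : 1 ≤ k) (α : Ordinal) :
    (∀ T T' : KTree k, T.Valid α → T'.Valid α → T'.Ext1 T → hAux T' α < hAux T α) ∧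
    (∀ T : KTree k, T.Valid α →
      hAux T α = sSup {o : Ordinal | ∃ T' : KTree k, T'.Valid α ∧ T'.Ext1 T ∧
        o = hAux T' α + 1}) := by
  exact ⟨fun T T' hT hT' hext => ext1_lt hext α hT hT', fun T hT => rank T α hT⟩
end

section
/- Fix an integer k ≥ 2 and let α = λ + n where λ is either 0 or a limit ordinal and n is a natural number. If λ = 0 then hNil_k(α) = (k^n − 1)/(k − 1) = Σ_{i=0}^{n−1} k^i; otherwise hNil_k(α) = k^α + Σ_{i=0}^{n−1} k^i, where k^α denotes ordinal exponentiation. -/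
infixl:65 " ♯ " => Ordinal.nadd

namespace Ordinal

theorem nadd_le_iff {a b c : Ordinal.{u}} :
    a ♯ b ≤ c ↔ (∀ a' < a, a' ♯ b < c) ∧ (∀ b' < b, a ♯ b' < c) := by
  rw [nadd]
  simp only [max_le_iff, Ordinal.iSup_le_iff, Order.succ_le_iff, Subtype.forall, Set.mem_Iio]

theorem lt_nadd_iff_s10 {a b c : Ordinal.{u}} :
    a < b ♯ c ↔ (∃ b' < b, a ≤ b' ♯ c) ∨ ∃ c' < c, a ≤ b ♯ c' := by
  rw [← not_le, nadd_le_iff]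
  simp only [not_and_or, not_forall, not_lt, exists_prop]

theorem nadd_lt_nadd_left {b c : Ordinal.{u}} (h : b < c) (a : Ordinal.{u}) : a ♯ b < a ♯ c :=
  lt_nadd_iff_s10.2 (Or.inr ⟨b, h, le_rfl⟩)

theorem nadd_lt_nadd_right {b c : Ordinal.{u}} (h : b < c) (a : Ordinal.{u}) : b ♯ a < c ♯ a :=
  lt_nadd_iff_s10.2 (Or.inl ⟨b, h, le_rfl⟩)

theorem nadd_le_nadd_left_s10 {b c : Ordinal.{u}} (h : b ≤ c) (a : Ordinal.{u}) : a ♯ b ≤ a ♯ c := by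
  rcases h.lt_or_eq with h | rfl
  · exact (nadd_lt_nadd_left h a).le
  · exact le_rfl

theorem nadd_le_nadd_right {b c : Ordinal.{u}} (h : b ≤ c) (a : Ordinal.{u}) : b ♯ a ≤ c ♯ a := by
  rcases h.lt_or_eq with h | rfl
  · exact (nadd_lt_nadd_right h a).le
  · exact le_rfl

theorem nadd_le_nadd {a b c d : Ordinal.{u}} (h₁ : a ≤ b) (h₂ : c ≤ d) : a ♯ c ≤ b ♯ d :=
  (nadd_le_nadd_right h₁ c).trans (nadd_le_nadd_left_s10 h₂ b)

theorem nadd_comm_le (a b : Ordinal.{u}) : a ♯ b ≤ b ♯ a := by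
  induction a using Ordinal.induction generalizing b with
  | h a IHa =>
  induction b using Ordinal.induction with
  | h b IHb =>
  rw [nadd_le_iff]
  constructor
  · intro a' ha
    exact (IHa a' ha b).trans_lt (nadd_lt_nadd_left ha b)
  · intro b' hb
    exact (IHb b' hb).trans_lt (nadd_lt_nadd_right hb a)

theorem nadd_comm_s10 (a b : Ordinal.{u}) : a ♯ b = b ♯ a :=
  le_antisymm (nadd_comm_le a b) (nadd_comm_le b a)

theorem nadd_assoc (a b c : Ordinal.{u}) : a ♯ b ♯ c = a ♯ (b ♯ c) := by
  induction a using Ordinal.induction generalizing b c with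
  | h a IHa =>
  induction b using Ordinal.induction generalizing c with
  | h b IHb =>
  induction c using Ordinal.induction with
  | h c IHc =>
  apply le_antisymm
  · rw [nadd_le_iff]
    constructor
    · intro x hx
      rcases lt_nadd_iff_s10.1 hx with ⟨a', ha, hx'⟩ | ⟨b', hb, hx'⟩
      · calc x ♯ c ≤ a' ♯ b ♯ c := nadd_le_nadd_right hx' c
          _ = a' ♯ (b ♯ c) := IHa a' ha b c
          _ < a ♯ (b ♯ c) := nadd_lt_nadd_right ha _
      · calc x ♯ c ≤ a ♯ b' ♯ c := nadd_le_nadd_right hx' c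
          _ = a ♯ (b' ♯ c) := IHb b' hb c
          _ < a ♯ (b ♯ c) := nadd_lt_nadd_left (nadd_lt_nadd_right hb c) a
    · intro c' hc
      rw [IHc c' hc]
      exact nadd_lt_nadd_left (nadd_lt_nadd_left hc b) a
  · rw [nadd_le_iff]
    constructor
    · intro a' ha
      rw [← IHa a' ha b c]
      exact nadd_lt_nadd_right (nadd_lt_nadd_right ha b) c
    · intro y hy
      rcases lt_nadd_iff_s10.1 hy with ⟨b', hb, hy'⟩ | ⟨c', hc, hy'⟩
      · calc a ♯ y ≤ a ♯ (b' ♯ c) := nadd_le_nadd_left_s10 hy' a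
          _ = a ♯ b' ♯ c := (IHb b' hb c).symm
          _ < a ♯ b ♯ c := nadd_lt_nadd_right (nadd_lt_nadd_left hb a) c
      · calc a ♯ y ≤ a ♯ (b ♯ c') := nadd_le_nadd_left_s10 hy' a
          _ = a ♯ b ♯ c' := (IHc c' hc).symm
          _ < a ♯ b ♯ c := nadd_lt_nadd_left hc _

theorem nadd_left_comm (a b c : Ordinal.{u}) : a ♯ (b ♯ c) = b ♯ (a ♯ c) := by
  rw [← nadd_assoc, nadd_comm_s10 a b, nadd_assoc]

theorem nadd_right_comm (a b c : Ordinal.{u}) : a ♯ b ♯ c = a ♯ c ♯ b := by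
  rw [nadd_assoc, nadd_comm_s10 b c, ← nadd_assoc]

theorem le_self_nadd (a b : Ordinal.{u}) : a ≤ a ♯ b := by
  induction a using Ordinal.induction with
  | h a IH =>
  apply le_of_forall_lt
  intro x hx
  exact (IH x hx).trans_lt (nadd_lt_nadd_right hx b)

theorem le_nadd_self {a b : Ordinal.{u}} : a ≤ b ♯ a := by
  rw [nadd_comm_s10]; exact le_self_nadd a b

@[simp]
theorem nadd_zero (a : Ordinal.{u}) : a ♯ 0 = a := by
  induction a using Ordinal.induction with
  | h a IH =>
  apply le_antisymm
  · rw [nadd_le_iff]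
    constructor
    · intro a' ha
      rw [IH a' ha]; exact ha
    · intro b' hb
      exact absurd hb (not_lt_zero (a := b'))
  · exact le_self_nadd a 0

@[simp]
theorem zero_nadd (a : Ordinal.{u}) : 0 ♯ a = a := by
  rw [nadd_comm_s10, nadd_zero]

theorem nadd_succ (a b : Ordinal.{u}) : a ♯ Order.succ b = Order.succ (a ♯ b) := by
  induction a using Ordinal.induction with
  | h a IH =>
  apply le_antisymm
  · rw [nadd_le_iff]
    constructor
    · intro a' ha
      rw [IH a' ha]
      exact Order.succ_lt_succ (nadd_lt_nadd_right ha b)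
    · intro b' hb
      exact (nadd_le_nadd_left_s10 (Order.lt_succ_iff.1 hb) a).trans_lt (Order.lt_succ _)
  · exact Order.succ_le_of_lt (nadd_lt_nadd_left (Order.lt_succ b) a)

theorem nadd_nat (a : Ordinal.{u}) (n : ℕ) : a ♯ n = a + n := by
  induction n with
  | zero => simp
  | succ n IH =>
    rw [Nat.cast_succ, add_one_eq_succ, nadd_succ, IH, ← add_one_eq_succ, add_assoc, add_one_eq_succ]

theorem add_le_nadd (a b : Ordinal.{u}) : a + b ≤ a ♯ b := by
  induction b using Ordinal.induction with
  | h b IH =>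
  apply le_of_forall_lt
  intro x hx
  rcases lt_or_ge x a with h | h
  · exact h.trans_le (le_self_nadd a b)
  · have hy : x - a < b := by
      by_contra hc
      rw [not_lt] at hc
      have := add_le_add_right hc a
      rw [Ordinal.add_sub_cancel_of_le h] at this
      exact absurd hx (not_lt.2 this)
    calc x = a + (x - a) := (Ordinal.add_sub_cancel_of_le h).symm
      _ ≤ a ♯ (x - a) := IH _ hy
      _ < a ♯ b := nadd_lt_nadd_left hy a

end Ordinal

open Ordinal

universe u

/-- ω^e is closed under natural addition; nadd of small remainder is ordinary add;
nadd of multiples of ω^e by naturals adds coefficients. -/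
theorem omega_key (e : Ordinal.{u}) :
    (∀ x < (ω : Ordinal.{u}) ^ e, ∀ y < (ω : Ordinal.{u}) ^ e, x ♯ y < ω ^ e) ∧
    (∀ m r : Ordinal.{u}, r < ω ^ e → ω ^ e * m ♯ r = ω ^ e * m + r) ∧
    (∀ a b : ℕ, (ω : Ordinal.{u}) ^ e * a ♯ ω ^ e * b = ω ^ e * ((a : Ordinal) + b)) := by
  induction e using Ordinal.induction with
  | h e IH =>
  have hone : ω ^ e ≠ 0 := opow_ne_zero e omega0_ne_zero
  have P : ∀ x < (ω : Ordinal.{u}) ^ e, ∀ y < (ω : Ordinal.{u}) ^ e, x ♯ y < ω ^ e := by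
    intro x hx y hy
    rcases eq_or_ne e 0 with rfl | he
    · rw [opow_zero, Ordinal.lt_one_iff_zero] at hx hy
      simp [hx, hy, opow_zero]
    rcases eq_or_ne x 0 with rfl | hx0
    · simpa using hy
    rcases eq_or_ne y 0 with rfl | hy0
    · simpa using hx
    set c := max (log ω x) (log ω y) with hc
    have hce : c < e := max_lt ((lt_opow_iff_log_lt one_lt_omega0 hx0).1 hx)
      ((lt_opow_iff_log_lt one_lt_omega0 hy0).1 hy)
    obtain ⟨Pc, Ec, Dc⟩ := IH c hce
    have hcne : (ω : Ordinal.{u}) ^ c ≠ 0 := opow_ne_zero c omega0_ne_zero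
    have hxq : x / ω ^ c < ω := by
      rw [div_lt hcne, ← opow_succ]
      exact (lt_opow_succ_log_self one_lt_omega0 x).trans_le
        (opow_le_opow_right omega0_pos (Order.succ_le_succ (le_max_left _ _)))
    have hyq : y / ω ^ c < ω := by
      rw [div_lt hcne, ← opow_succ]
      exact (lt_opow_succ_log_self one_lt_omega0 y).trans_le
        (opow_le_opow_right omega0_pos (Order.succ_le_succ (le_max_right _ _)))
    obtain ⟨qx, hqx⟩ := lt_omega0.1 hxq
    obtain ⟨qy, hqy⟩ := lt_omega0.1 hyq
    have hrx : x % ω ^ c < ω ^ c := mod_lt x hcne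
    have hry : y % ω ^ c < ω ^ c := mod_lt y hcne
    calc x ♯ y = (ω ^ c * ↑qx + x % ω ^ c) ♯ (ω ^ c * ↑qy + y % ω ^ c) := by
          rw [← hqx, ← hqy, div_add_mod, div_add_mod]
      _ ≤ (ω ^ c * ↑qx ♯ x % ω ^ c) ♯ (ω ^ c * ↑qy ♯ y % ω ^ c) :=
          nadd_le_nadd (add_le_nadd _ _) (add_le_nadd _ _)
      _ = (ω ^ c * ↑qx ♯ ω ^ c * ↑qy) ♯ (x % ω ^ c ♯ y % ω ^ c) := by
          rw [nadd_assoc, nadd_left_comm (x % ω ^ c), ← nadd_assoc]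
      _ = ω ^ c * (↑qx + ↑qy) ♯ (x % ω ^ c ♯ y % ω ^ c) := by rw [Dc]
      _ = ω ^ c * (↑qx + ↑qy) + (x % ω ^ c ♯ y % ω ^ c) := Ec _ _ (Pc _ hrx _ hry)
      _ < ω ^ c * (↑qx + ↑qy) + ω ^ c := add_lt_add_right (Pc _ hrx _ hry) _
      _ = ω ^ c * ((↑qx + ↑qy) + 1) := by rw [mul_add (ω ^ c) (↑qx + ↑qy) 1, mul_one]
      _ ≤ ω ^ c * ω := by
          apply mul_le_mul_right
          exact le_of_lt (by
            have : ((qx + qy + 1 : ℕ) : Ordinal) < ω := nat_lt_omega0 _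
            simpa [Nat.cast_add] using this)
      _ = ω ^ (c + 1) := by rw [opow_add, opow_one]
      _ ≤ ω ^ e := opow_le_opow_right omega0_pos (by
            rw [add_one_eq_succ]; exact Order.succ_le_of_lt hce)
  have E : ∀ m r : Ordinal.{u}, r < ω ^ e → ω ^ e * m ♯ r = ω ^ e * m + r := by
    intro m
    induction m using Ordinal.induction with
    | h m IHm =>
    intro r
    induction r using Ordinal.induction with
    | h r IHr =>
    intro hr
    refine le_antisymm ?_ (add_le_nadd _ _)
    rw [nadd_le_iff]
    constructor
    · intro x hx
      have hq : x / ω ^ e < m := (div_lt hone).2 hx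
      have hmod : x % ω ^ e ♯ r < ω ^ e := P _ (mod_lt x hone) _ hr
      calc x ♯ r = (ω ^ e * (x / ω ^ e) + x % ω ^ e) ♯ r := by rw [div_add_mod]
        _ ≤ (ω ^ e * (x / ω ^ e) ♯ x % ω ^ e) ♯ r := nadd_le_nadd_right (add_le_nadd _ _) r
        _ = ω ^ e * (x / ω ^ e) ♯ (x % ω ^ e ♯ r) := nadd_assoc _ _ _
        _ = ω ^ e * (x / ω ^ e) + (x % ω ^ e ♯ r) := IHm _ hq _ hmod
        _ < ω ^ e * (x / ω ^ e) + ω ^ e := add_lt_add_right hmod _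
        _ = ω ^ e * (x / ω ^ e + 1) := by rw [mul_add, mul_one]
        _ ≤ ω ^ e * m := mul_le_mul_right (by rw [add_one_eq_succ]; exact Order.succ_le_of_lt hq) _
        _ ≤ ω ^ e * m + r := le_self_add
    · intro r' hr'
      rw [IHr r' hr' (hr'.trans hr)]
      exact add_lt_add_right hr' _
  have D : ∀ N a b : ℕ, a + b ≤ N →
      (ω : Ordinal.{u}) ^ e * a ♯ ω ^ e * b = ω ^ e * ((a : Ordinal) + b) := by
    intro N
    induction N with
    | zero =>
      intro a b h
      have ha : a = 0 := by omega
      have hb : b = 0 := by omega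
      subst ha; subst hb; simp
    | succ N IHN =>
      intro a b hab
      have half : ∀ a b : ℕ, a + b ≤ N + 1 → ∀ x < ω ^ e * (a : Ordinal),
          x ♯ ω ^ e * (b : Ordinal) < ω ^ e * ((a : Ordinal) + b) := by
        intro a b hab x hx
        have hq : x / ω ^ e < (a : Ordinal) := (div_lt hone).2 hx
        obtain ⟨q, hq'⟩ := lt_omega0.1 (hq.trans (nat_lt_omega0 a))
        have hqa : q < a := by rwa [hq', Nat.cast_lt] at hq
        have hmod : x % ω ^ e < ω ^ e := mod_lt x hone
        calc x ♯ ω ^ e * (b : Ordinal)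
            = (ω ^ e * (x / ω ^ e) + x % ω ^ e) ♯ ω ^ e * (b : Ordinal) := by rw [div_add_mod]
          _ ≤ (ω ^ e * (x / ω ^ e) ♯ x % ω ^ e) ♯ ω ^ e * (b : Ordinal) :=
              nadd_le_nadd_right (add_le_nadd _ _) _
          _ = (ω ^ e * (x / ω ^ e) ♯ ω ^ e * (b : Ordinal)) ♯ x % ω ^ e := nadd_right_comm _ _ _
          _ = ω ^ e * ((q : Ordinal) + b) ♯ x % ω ^ e := by rw [hq', IHN q b (by omega)]
          _ = ω ^ e * ((q : Ordinal) + b) + x % ω ^ e := E _ _ hmod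
          _ < ω ^ e * ((q : Ordinal) + b) + ω ^ e := add_lt_add_right hmod _
          _ = ω ^ e * ((q : Ordinal) + b + 1) := by rw [mul_add (ω ^ e) _ 1, mul_one]
          _ ≤ ω ^ e * ((a : Ordinal) + b) := by
              apply mul_le_mul_right
              have h2 : ((q + b + 1 : ℕ) : Ordinal) ≤ ((a + b : ℕ) : Ordinal) :=
                Nat.cast_le.2 (by omega)
              simpa [Nat.cast_add] using h2
      refine le_antisymm ?_ ?_
      · rw [nadd_le_iff]
        constructor
        · intro x hx; exact half a b hab x hx
        · intro y hy
          rw [nadd_comm_s10]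
          have h3 := half b a (by omega) y hy
          have h4 : ((b : Ordinal) + a) = ((a : Ordinal) + b) := by
            rw [← Nat.cast_add, ← Nat.cast_add, Nat.add_comm]
          rwa [h4] at h3
      · calc ω ^ e * ((a : Ordinal) + b) = ω ^ e * a + ω ^ e * b := mul_add _ _ _
          _ ≤ _ := add_le_nadd _ _
  exact ⟨P, E, fun a b => D (a + b) a b le_rfl⟩

theorem stmt10_F (e : Ordinal.{u}) (a s b t : ℕ) :
    (ω ^ e * (a : Ordinal) + (s : Ordinal)) ♯ (ω ^ e * (b : Ordinal) + (t : Ordinal)) =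
      ω ^ e * ((a + b : ℕ) : Ordinal) + ((s + t : ℕ) : Ordinal) := by
  obtain ⟨P, E, D⟩ := omega_key e
  calc (ω ^ e * (a : Ordinal) + (s : Ordinal)) ♯ (ω ^ e * (b : Ordinal) + (t : Ordinal))
      = (ω ^ e * (a : Ordinal) ♯ (s : Ordinal)) ♯ (ω ^ e * (b : Ordinal) ♯ (t : Ordinal)) := by
        rw [nadd_nat, nadd_nat]
    _ = (ω ^ e * (a : Ordinal) ♯ ω ^ e * (b : Ordinal)) ♯ ((s : Ordinal) ♯ (t : Ordinal)) := by
        rw [nadd_assoc, nadd_left_comm (s : Ordinal), ← nadd_assoc]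
    _ = ω ^ e * ((a : Ordinal) + (b : Ordinal)) ♯ ((s : Ordinal) ♯ (t : Ordinal)) := by rw [D]
    _ = ω ^ e * ((a : Ordinal) + (b : Ordinal)) ♯ ((s + t : ℕ) : Ordinal) := by
        rw [nadd_nat, Nat.cast_add]
    _ = ω ^ e * ((a : Ordinal) + (b : Ordinal)) + ((s + t : ℕ) : Ordinal) := by rw [nadd_nat]
    _ = ω ^ e * ((a + b : ℕ) : Ordinal) + ((s + t : ℕ) : Ordinal) := by rw [Nat.cast_add a b]

theorem nmulNat_mix (e : Ordinal.{u}) (a s : ℕ) (j : ℕ) :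
    nmulNat (ω ^ e * (a : Ordinal) + (s : Ordinal)) j =
      ω ^ e * ((a * j : ℕ) : Ordinal) + ((s * j : ℕ) : Ordinal) := by
  induction j with
  | zero => simp [nmulNat]
  | succ j IHj =>
    show (nmulNat _ j) ♯ _ = _
    rw [IHj, stmt10_F, Nat.mul_succ a j, Nat.mul_succ s j]

theorem nmulNat_natCast (s : ℕ) (j : ℕ) :
    nmulNat ((s : ℕ) : Ordinal.{u}) j = ((s * j : ℕ) : Ordinal) := by
  have := nmulNat_mix (0 : Ordinal.{u}) 0 s j
  simpa using this

theorem le_nmulNat (γ : Ordinal.{u}) {j : ℕ} (hj : 1 ≤ j) : γ ≤ nmulNat γ j := by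
  cases j with
  | zero => omega
  | succ j => exact le_nadd_self

theorem nmulNat_mono {γ δ : Ordinal.{u}} (h : γ ≤ δ) (j : ℕ) : nmulNat γ j ≤ nmulNat δ j := by
  induction j with
  | zero => exact le_rfl
  | succ j IH => exact nadd_le_nadd IH h

theorem hNil_zero (k : ℕ) : (hNil k (0 : Ordinal.{u}) : Ordinal.{u}) = 0 := by
  rw [hNil]
  haveI : IsEmpty (Set.Iio (0 : Ordinal.{u})) :=
    ⟨fun β => (not_lt_zero (a := β.1) β.2).elim⟩
  rw [ciSup_of_empty]
  rfl

theorem hNil_lt (k : ℕ) (hk : 1 ≤ k) {β α : Ordinal.{u}} (h : β < α) :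
    (hNil k β : Ordinal.{u}) < hNil k α := by
  have h1 : nmulNat (hNil k β) k + 1 ≤ hNil k α := by
    conv_rhs => rw [hNil]
    exact Ordinal.le_iSup (fun γ : Set.Iio α => nmulNat (hNil k γ.1) k + 1) (⟨β, h⟩ : Set.Iio α)
  refine lt_of_lt_of_le ?_ h1
  have h2 : hNil k β ≤ nmulNat (hNil k β) k := le_nmulNat _ hk
  refine lt_of_le_of_lt h2 ?_
  rw [add_one_eq_succ]
  exact Order.lt_succ _

theorem hNil_mono (k : ℕ) (hk : 1 ≤ k) {β α : Ordinal.{u}} (h : β ≤ α) :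
    (hNil k β : Ordinal.{u}) ≤ hNil k α := by
  rcases eq_or_lt_of_le h with rfl | h
  · exact le_rfl
  · exact (hNil_lt k hk h).le

theorem hNil_succ (k : ℕ) (hk : 1 ≤ k) (α : Ordinal.{u}) :
    (hNil k (α + 1) : Ordinal.{u}) = nmulNat (hNil k α) k + 1 := by
  apply le_antisymm
  · rw [hNil]
    apply Ordinal.iSup_le
    rintro ⟨β, hβ⟩
    have hβ' : β ≤ α := by
      rw [Set.mem_Iio, add_one_eq_succ, Order.lt_succ_iff] at hβ
      exact hβ
    exact add_le_add_left (nmulNat_mono (hNil_mono k hk hβ') k) 1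
  · conv_rhs => rw [hNil]
    exact Ordinal.le_iSup (fun γ : Set.Iio (α + 1) => nmulNat (hNil k γ.1) k + 1)
      (⟨α, by rw [Set.mem_Iio, add_one_eq_succ]; exact Order.lt_succ _⟩ : Set.Iio (α + 1))

/-- geometric sum in ℕ -/
def Snat (k n : ℕ) : ℕ := ∑ i ∈ Finset.range n, k ^ i

theorem Snat_succ (k n : ℕ) : Snat k (n + 1) = Snat k n + k ^ n :=
  Finset.sum_range_succ _ _

theorem Snat_mul_add_one (k n : ℕ) : Snat k (n + 1) = Snat k n * k + 1 := by
  induction n with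
  | zero => simp [Snat]
  | succ n IH =>
    calc Snat k (n + 1 + 1) = Snat k (n + 1) + k ^ (n + 1) := Snat_succ k (n + 1)
      _ = (Snat k n * k + 1) + k ^ (n + 1) := by rw [IH]
      _ = (Snat k n + k ^ n) * k + 1 := by ring
      _ = Snat k (n + 1) * k + 1 := by rw [← Snat_succ k n]

theorem Snat_lt_pow {k : ℕ} (hk : 2 ≤ k) (n : ℕ) : Snat k n < k ^ n := by
  induction n with
  | zero => simp [Snat]
  | succ n IH =>
    calc Snat k (n + 1) = Snat k n + k ^ n := Snat_succ k n
      _ < k ^ n + k ^ n := by omega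
      _ = 2 * k ^ n := by ring
      _ ≤ k * k ^ n := Nat.mul_le_mul_right _ hk
      _ = k ^ (n + 1) := by ring

theorem pow_le_Snat (k n : ℕ) : k ^ n ≤ Snat k (n + 1) := by
  have := Snat_succ k n
  omega

theorem hNil_nat (k : ℕ) (hk : 1 ≤ k) (n : ℕ) :
    (hNil k ((n : ℕ) : Ordinal.{u}) : Ordinal.{u}) = ((Snat k n : ℕ) : Ordinal) := by
  induction n with
  | zero => simpa [Snat] using hNil_zero k
  | succ n IH =>
    have hc : ((n + 1 : ℕ) : Ordinal.{u}) = ((n : ℕ) : Ordinal) + 1 := by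
      rw [Nat.cast_succ]
    rw [hc, hNil_succ k hk, IH, nmulNat_natCast, Snat_mul_add_one]
    rw [Nat.cast_add, Nat.cast_one]

theorem hNil_limit (k : ℕ) (hk : 2 ≤ k) : ∀ l : Ordinal.{u}, Order.IsSuccLimit l → ∀ n : ℕ,
    (hNil k (l + (n : Ordinal)) : Ordinal.{u}) =
      (k : Ordinal) ^ (l + (n : Ordinal)) + ((Snat k n : ℕ) : Ordinal) := by
  intro l
  induction l using Ordinal.induction with
  | h l IHl =>
  intro hl
  have hk1 : 1 ≤ k := by omega
  have hkO : (1 : Ordinal.{u}) < (k : Ordinal) := by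
    have : ((1 : ℕ) : Ordinal.{u}) < ((k : ℕ) : Ordinal) := Nat.cast_lt.2 (by omega)
    simpa using this
  have hk0 : (0 : Ordinal.{u}) < (k : Ordinal) := lt_trans zero_lt_one hkO
  have homega : ω ≤ (k : Ordinal.{u}) ^ l := by
    rw [← opow_omega0 hkO (nat_lt_omega0 k)]
    exact opow_le_opow_right hk0 (omega0_le_of_isSuccLimit hl)
  have h2k : (2 : Ordinal.{u}) ≤ (k : Ordinal) := by
    have : ((2 : ℕ) : Ordinal.{u}) ≤ ((k : ℕ) : Ordinal) := Nat.cast_le.2 hk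
    simpa using this
  have base : (hNil k l : Ordinal.{u}) = (k : Ordinal) ^ l := by
    apply le_antisymm
    · conv_lhs => rw [hNil]
      apply Ordinal.iSup_le
      rintro ⟨β, hβ⟩
      rw [Set.mem_Iio] at hβ
      have hβ1 : β + 1 < l := by rw [add_one_eq_succ]; exact hl.succ_lt hβ
      rw [← hNil_succ k hk1 β]
      -- decompose β + 1 = ω * q + m
      obtain ⟨m, hm⟩ := lt_omega0.1 (mod_lt (β + 1) omega0_ne_zero)
      have hdecomp : ω * ((β + 1) / ω) + (m : Ordinal) = β + 1 := by
        rw [← hm]; exact div_add_mod _ _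
      rcases eq_or_ne ((β + 1) / ω) 0 with hq0 | hq0
      · have hβm : β + 1 = ((m : ℕ) : Ordinal) := by
          rw [← hdecomp, hq0, mul_zero, zero_add]
        rw [hβm, hNil_nat k hk1]
        exact le_of_lt (lt_of_lt_of_le (nat_lt_omega0 _) homega)
      · have hμ : Order.IsSuccLimit (ω * ((β + 1) / ω)) :=
          isSuccLimit_iff_omega0_dvd.2 ⟨_root_.mul_ne_zero omega0_ne_zero hq0, dvd_mul_right ω _⟩
        have hμlt : ω * ((β + 1) / ω) < l :=
          lt_of_le_of_lt (le_trans le_self_add hdecomp.le) hβ1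
        have hval := IHl _ hμlt hμ m
        rw [← hdecomp, hval]
        have hSm : ((Snat k m : ℕ) : Ordinal) < (k : Ordinal) ^ ((m : ℕ) : Ordinal) := by
          rw [← natCast_opow]
          exact Nat.cast_lt.2 (Snat_lt_pow hk m)
        have hmle : (k : Ordinal) ^ ((m : ℕ) : Ordinal) ≤
            (k : Ordinal) ^ (ω * ((β + 1) / ω) + (m : Ordinal)) :=
          opow_le_opow_right hk0 le_add_self
        set X := (k : Ordinal) ^ (ω * ((β + 1) / ω) + (m : Ordinal)) with hX
        calc X + ((Snat k m : ℕ) : Ordinal) ≤ X + X := by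
              exact le_of_lt (add_lt_add_right (lt_of_lt_of_le hSm hmle) X)
          _ = X * 2 := by
              rw [show (2 : Ordinal.{u}) = 1 + 1 by norm_num, mul_add, mul_one]
          _ ≤ X * (k : Ordinal) := mul_le_mul_right h2k X
          _ = (k : Ordinal) ^ (ω * ((β + 1) / ω) + (m : Ordinal) + 1) := by
              rw [opow_add, opow_one]
          _ ≤ (k : Ordinal) ^ l := by
              apply opow_le_opow_right hk0
              rw [hdecomp, add_one_eq_succ, Order.succ_le_iff]
              exact hβ1
    · apply le_of_forall_lt
      intro x hx
      rcases eq_or_ne x 0 with rfl | hx0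
      · have h0 := hNil_lt k hk1 (α := l) (β := 0) hl.pos
        rwa [hNil_zero] at h0
      · have hlog : log (k : Ordinal) x < l := (lt_opow_iff_log_lt hkO hx0).1 hx
        set β := log (k : Ordinal) x + 1 with hβdef
        have hβl : β < l := by rw [hβdef, add_one_eq_succ]; exact hl.succ_lt hlog
        have hxβ : x < (k : Ordinal) ^ β := by
          rw [hβdef, add_one_eq_succ]
          exact lt_opow_succ_log_self hkO x
        have hβ1l : β + 1 < l := by rw [add_one_eq_succ]; exact hl.succ_lt hβl
        obtain ⟨m, hm⟩ := lt_omega0.1 (mod_lt β omega0_ne_zero)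
        have hdecomp : ω * (β / ω) + (m : Ordinal) = β := by
          rw [← hm]; exact div_add_mod _ _
        have hkey : (k : Ordinal) ^ β ≤ hNil k (β + 1) := by
          rcases eq_or_ne (β / ω) 0 with hq0 | hq0
          · have hβm : β = ((m : ℕ) : Ordinal) := by
              rw [← hdecomp, hq0, mul_zero, zero_add]
            have hβ1m : β + 1 = ((m + 1 : ℕ) : Ordinal) := by
              rw [hβm, Nat.cast_succ]
            rw [hβ1m, hNil_nat k hk1, hβm, ← natCast_opow]
            exact Nat.cast_le.2 (pow_le_Snat k m)
          · have hμ : Order.IsSuccLimit (ω * (β / ω)) :=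
              isSuccLimit_iff_omega0_dvd.2 ⟨_root_.mul_ne_zero omega0_ne_zero hq0, dvd_mul_right ω _⟩
            have hμlt : ω * (β / ω) < l :=
              lt_of_le_of_lt (le_trans le_self_add hdecomp.le) hβl
            have hval := IHl _ hμlt hμ (m + 1)
            have hβ1m : β + 1 = ω * (β / ω) + ((m + 1 : ℕ) : Ordinal) := by
              rw [Nat.cast_succ, ← add_assoc, hdecomp]
            rw [hβ1m, hval]
            refine le_trans ?_ le_self_add
            apply opow_le_opow_right hk0
            rw [← hβ1m]
            exact le_self_add
        have hfin : (hNil k (β + 1) : Ordinal.{u}) < hNil k l := hNil_lt k hk1 hβ1l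
        exact lt_of_lt_of_le hxβ (le_trans hkey hfin.le)
  intro n
  induction n with
  | zero => simpa [Snat] using base
  | succ n IHn =>
    have hcast : l + ((n + 1 : ℕ) : Ordinal) = (l + (n : Ordinal)) + 1 := by
      rw [Nat.cast_succ, add_assoc]
    rw [hcast, hNil_succ k hk1, IHn]
    obtain ⟨e, he⟩ : ω ∣ l := (isSuccLimit_iff_omega0_dvd.1 hl).2
    have hkl : (k : Ordinal) ^ l = ω ^ e := by
      rw [he, opow_mul, opow_omega0 hkO (nat_lt_omega0 k)]
    have hsplit : ∀ j : ℕ, (k : Ordinal) ^ (l + (j : Ordinal)) = ω ^ e * ((k ^ j : ℕ) : Ordinal) := by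
      intro j
      rw [opow_add, hkl, natCast_opow]
    rw [hsplit n, nmulNat_mix, ← hcast, hsplit (n + 1)]
    rw [← pow_succ k n, add_assoc]
    congr 1
    rw [Snat_mul_add_one, Nat.cast_add, Nat.cast_one]

universe v

theorem small_Iio_nat (n : ℕ) : Small.{v} (Set.Iio ((n : ℕ) : Ordinal.{u})) := by
  haveI : Small.{v} (Fin n) := small_lift.{0, v, v} (Fin n)
  apply small_of_surjective.{v}
    (f := fun i : Fin n => (⟨((i : ℕ) : Ordinal.{u}), Set.mem_Iio.2 (Nat.cast_lt.2 i.2)⟩ :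
      Set.Iio ((n : ℕ) : Ordinal.{u})))
  rintro ⟨β, hβ⟩
  rw [Set.mem_Iio] at hβ
  obtain ⟨m, rfl⟩ := lt_omega0.1 (hβ.trans (nat_lt_omega0 n))
  exact ⟨⟨m, Nat.cast_lt.1 hβ⟩, rfl⟩

theorem Snat_mono (k : ℕ) {m n : ℕ} (h : m ≤ n) : Snat k m ≤ Snat k n :=
  Finset.sum_le_sum_of_subset (Finset.range_subset_range.2 h)

theorem hNil_nat' (k : ℕ) (hk : 1 ≤ k) : ∀ n : ℕ,
    (hNil.{u, v} k ((n : ℕ) : Ordinal.{u}) : Ordinal.{v}) = ((Snat k n : ℕ) : Ordinal.{v}) := by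
  intro n
  induction n using Nat.strong_induction_on with
  | _ n IH =>
  cases n with
  | zero =>
    rw [hNil]
    haveI : IsEmpty (Set.Iio (((0 : ℕ) : ℕ) : Ordinal.{u})) :=
      ⟨fun β => by
        have := β.2
        rw [Set.mem_Iio] at this
        exact not_lt_zero (a := (β : Ordinal.{u})) (by simpa using this)⟩
    rw [ciSup_of_empty]
    simp [Snat]
  | succ n =>
    haveI := small_Iio_nat.{u, v} (n + 1)
    apply le_antisymm
    · rw [hNil]
      apply Ordinal.iSup_le
      rintro ⟨β, hβ⟩
      rw [Set.mem_Iio] at hβ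
      obtain ⟨m, rfl⟩ := lt_omega0.1 (hβ.trans (nat_lt_omega0 (n + 1)))
      have hm : m < n + 1 := Nat.cast_lt.1 hβ
      rw [IH m hm, nmulNat_natCast, ← Nat.cast_one (R := Ordinal.{v}), ← Nat.cast_add,
        ← Snat_mul_add_one]
      exact Nat.cast_le.2 (Snat_mono k hm)
    · have h1 : (hNil.{u, v} k ((n : ℕ) : Ordinal.{u}) : Ordinal.{v}) =
          ((Snat k n : ℕ) : Ordinal.{v}) := IH n (by omega)
      conv_rhs => rw [hNil]
      have h2 := Ordinal.le_iSup
        (fun β : Set.Iio (((n + 1 : ℕ) : ℕ) : Ordinal.{u}) =>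
          (nmulNat (hNil.{u, v} k β.1) k + 1 : Ordinal.{v}))
        (⟨((n : ℕ) : Ordinal.{u}), by rw [Set.mem_Iio]; exact Nat.cast_lt.2 (by omega)⟩ :
          Set.Iio (((n + 1 : ℕ) : ℕ) : Ordinal.{u}))
      refine le_trans ?_ h2
      rw [h1, nmulNat_natCast, ← Nat.cast_one (R := Ordinal.{v}), ← Nat.cast_add,
        ← Snat_mul_add_one]

/-- for `k ≥ 2` and `α = λ + n` with `λ` zero or a limit ordinal and `n : ℕ`:
if `λ = 0` then `hNil k α = (k^n - 1)/(k-1) = Σ_{i=0}^{n-1} k^i`, and otherwise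
`hNil k α = k^α + Σ_{i=0}^{n-1} k^i` (ordinal exponentiation). -/
theorem stmt_10 (k : ℕ) (hk : 2 ≤ k) (l : Ordinal) (hl : l = 0 ∨ Order.IsSuccLimit l) (n : ℕ) :
    ((k ^ n - 1) / (k - 1) = ∑ i ∈ Finset.range n, k ^ i) ∧
    (l = 0 → hNil k (l + (n : Ordinal)) = ((∑ i ∈ Finset.range n, k ^ i : ℕ) : Ordinal)) ∧
    (l ≠ 0 → hNil k (l + (n : Ordinal)) =
      (k : Ordinal) ^ (l + (n : Ordinal)) + ((∑ i ∈ Finset.range n, k ^ i : ℕ) : Ordinal)) := by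
  refine ⟨(Nat.geomSum_eq hk n).symm, ?_, ?_⟩
  · rintro rfl
    rw [zero_add]
    exact hNil_nat' k (by omega) n
  · intro hl0
    exact hNil_limit k hk l (hl.resolve_left hl0) n
end
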